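/- For every k ≥ 1, d ≥ 1, real parameters 0 < α₁ ≤ ... ≤ α_d, every s ∈ (0,1), and every p = (p_x, p_z) with |p_z| < 2π/α_d, p_z ≠ 0 and not all p_x^i zero (i = 1,...,d), the Carnot distortion coefficient τ_s^{k,α}(p) = s·(Σᵢ ‖p_x^i‖² ∏_{j≠i} d₁²(α_j p_z, s) d₁(α_i p_z, s) d₂(α_i p_z, s) / Σᵢ ‖p_x^i‖² ∏_{j≠i} d₁²(α_j p_z, 1) d₁(α_i p_z, 1) d₂(α_i p_z, 1))^{1/(k+1)} satisfies τ_s^{k,α}(p) ≥ s^{(k+3)/(k+1)}. -/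

import Mathlib

open Real

lemma sin_smul_ge (s x : ℝ) (hs : 0 ≤ s) (hs1 : s ≤ 1) (hx : 0 ≤ x) (hxπ : x ≤ π) :
    s * Real.sin x ≤ Real.sin (x * s) := by
  have h := _root_.strictConcaveOn_sin_Icc.concaveOn.2 (Set.mem_Icc.2 ⟨le_refl 0, Real.pi_pos.le⟩)
    (Set.mem_Icc.2 ⟨hx, hxπ⟩) (by linarith : (0:ℝ) ≤ 1 - s) hs (by ring)
  simpa [smul_eq_mul, mul_comm] using h

lemma g_pos (x : ℝ) (hx : 0 < x) (hxπ : x < π) : 0 < Real.sin x - x * Real.cos x := by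
  have hmono : StrictMonoOn (fun v => Real.sin v - v * Real.cos v) (Set.Icc 0 π) := by
    have hder : ∀ v : ℝ, HasDerivAt (fun v => Real.sin v - v * Real.cos v) (v * Real.sin v) v := by
      intro v
      have h := (Real.hasDerivAt_sin v).sub ((hasDerivAt_id v).mul (Real.hasDerivAt_cos v))
      simp only [id_eq] at h
      exact h.congr_deriv (by ring)
    apply strictMonoOn_of_deriv_pos (convex_Icc 0 π)
    · exact (Real.continuous_sin.sub (continuous_id.mul Real.continuous_cos)).continuousOn
    · intro v hv
      rw [interior_Icc] at hv
      rw [(hder v).deriv]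
      exact mul_pos hv.1 (Real.sin_pos_of_pos_of_lt_pi hv.1 hv.2)
  have := hmono (Set.mem_Icc.2 ⟨le_refl 0, Real.pi_pos.le⟩)
    (Set.mem_Icc.2 ⟨hx.le, hxπ.le⟩) hx
  simpa using this

lemma g_smul_ge (s x : ℝ) (hs : 0 < s) (hs1 : s ≤ 1) (hx : 0 ≤ x) (hxπ : x ≤ π) :
    s ^ 3 * (Real.sin x - x * Real.cos x) ≤
      Real.sin (x * s) - x * s * Real.cos (x * s) := by
  set F : ℝ → ℝ := fun v => Real.sin (v * s) - v * s * Real.cos (v * s)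
    - s ^ 3 * (Real.sin v - v * Real.cos v) with hF
  have hder : ∀ v : ℝ, HasDerivAt F (s ^ 2 * v * (Real.sin (v * s) - s * Real.sin v)) v := by
    intro v
    have hlin : HasDerivAt (fun v : ℝ => v * s) s v := by
      simpa using (hasDerivAt_id v).mul_const s
    have h1 : HasDerivAt (fun v : ℝ => Real.sin (v * s)) (Real.cos (v * s) * s) v :=
      by have := (Real.hasDerivAt_sin (v * s)).comp v hlin; exact this
    have h2 : HasDerivAt (fun v : ℝ => Real.cos (v * s)) (-Real.sin (v * s) * s) v :=
      by have := (Real.hasDerivAt_cos (v * s)).comp v hlin; exact this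
    have h3 : HasDerivAt (fun v : ℝ => v * s * Real.cos (v * s))
        (s * Real.cos (v * s) + v * s * (-Real.sin (v * s) * s)) v := by
      have := hlin.mul h2; exact this
    have h4 : HasDerivAt (fun v : ℝ => Real.sin v - v * Real.cos v) (v * Real.sin v) v := by
      have h := (Real.hasDerivAt_sin v).sub ((hasDerivAt_id v).mul (Real.hasDerivAt_cos v))
      simp only [id_eq] at h
      exact h.congr_deriv (by ring)
    have h := (h1.sub h3).sub (h4.const_mul (s ^ 3))
    exact h.congr_deriv (by ring)
  have hmono : MonotoneOn F (Set.Icc 0 π) := by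
    apply monotoneOn_of_deriv_nonneg (convex_Icc 0 π)
    · exact Continuous.continuousOn (by continuity)
    · intro v hv
      exact ((hder v).differentiableAt).differentiableWithinAt
    · intro v hv
      rw [interior_Icc] at hv
      rw [(hder v).deriv]
      have := sin_smul_ge s v hs.le hs1 hv.1.le hv.2.le
      have hv1 : (0:ℝ) ≤ s ^ 2 * v := mul_nonneg (sq_nonneg s) hv.1.le
      nlinarith
  have h0 : F 0 = 0 := by simp [hF]
  have := hmono (Set.mem_Icc.2 ⟨le_refl 0, Real.pi_pos.le⟩) (Set.mem_Icc.2 ⟨hx, hxπ⟩) hx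
  rw [h0] at this
  simp only [hF] at this
  linarith

lemma abs_rw_sq (t σ : ℝ) :
    (Real.sin (t * σ / 2) / σ) ^ 2 = (Real.sin (|t| / 2 * σ) / σ) ^ 2 := by
  rcases le_or_gt 0 t with h | h
  · rw [abs_of_nonneg h]; ring_nf
  · rw [abs_of_neg h, show -t / 2 * σ = -(t * σ / 2) by ring, Real.sin_neg]
    ring

lemma abs_rw_prod (t σ : ℝ) :
    (Real.sin (t * σ / 2) / σ) *
      ((Real.sin (t * σ / 2) - t * σ / 2 * Real.cos (t * σ / 2)) / σ) =
    (Real.sin (|t| / 2 * σ) / σ) *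
      ((Real.sin (|t| / 2 * σ) - |t| / 2 * σ * Real.cos (|t| / 2 * σ)) / σ) := by
  rcases le_or_gt 0 t with h | h
  · rw [abs_of_nonneg h]; ring_nf
  · rw [abs_of_neg h, show -t / 2 * σ = -(t * σ / 2) by ring, Real.sin_neg, Real.cos_neg]
    ring

lemma term_ge (s x : ℝ) (hs : 0 < s) (hs1 : s ≤ 1) (hx : 0 < x) (hxπ : x < π) :
    s ^ 2 * (Real.sin x * (Real.sin x - x * Real.cos x)) ≤
      (Real.sin (x * s) / s) * ((Real.sin (x * s) - x * s * Real.cos (x * s)) / s) := by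
  have hA0 : 0 ≤ Real.sin x := (Real.sin_pos_of_pos_of_lt_pi hx hxπ).le
  have hA : Real.sin x ≤ Real.sin (x * s) / s := by
    rw [le_div_iff₀ hs, mul_comm]
    exact sin_smul_ge s x hs.le hs1 hx.le hxπ.le
  have hB0 : 0 ≤ Real.sin x - x * Real.cos x := (g_pos x hx hxπ).le
  have hB : s ^ 2 * (Real.sin x - x * Real.cos x) ≤
      (Real.sin (x * s) - x * s * Real.cos (x * s)) / s := by
    rw [le_div_iff₀ hs]
    have := g_smul_ge s x hs hs1 hx.le hxπ.le
    nlinarith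
  calc s ^ 2 * (Real.sin x * (Real.sin x - x * Real.cos x))
      = Real.sin x * (s ^ 2 * (Real.sin x - x * Real.cos x)) := by ring
    _ ≤ (Real.sin (x * s) / s) * ((Real.sin (x * s) - x * s * Real.cos (x * s)) / s) :=
        mul_le_mul hA hB (mul_nonneg (sq_nonneg s) hB0) (le_trans hA0 hA)

lemma sq_factor_ge (s x : ℝ) (hs : 0 < s) (hs1 : s ≤ 1) (hx : 0 < x) (hxπ : x < π) :
    (Real.sin x) ^ 2 ≤ (Real.sin (x * s) / s) ^ 2 := by
  have hA0 : 0 ≤ Real.sin x := (Real.sin_pos_of_pos_of_lt_pi hx hxπ).le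
  have hA : Real.sin x ≤ Real.sin (x * s) / s := by
    rw [le_div_iff₀ hs, mul_comm]
    exact sin_smul_ge s x hs.le hs1 hx.le hxπ.le
  exact pow_le_pow_left₀ hA0 hA 2

open Finset

theorem tau_lower_bound (k d : ℕ) (hk : 1 ≤ k) (hd : 1 ≤ d)
    (α : Fin d → ℝ) (hαpos : ∀ i, 0 < α i) (hαmono : Monotone α)
    (s : ℝ) (hs : s ∈ Set.Ioo (0:ℝ) 1)
    (px : Fin d → EuclideanSpace ℝ (Fin 2)) (pz : ℝ) (hpz : pz ≠ 0)
    (hpzb : |pz| < 2 * π / α ⟨d - 1, by omega⟩)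
    (hpx : ∃ i, px i ≠ 0) :
    s * ((∑ i, ‖px i‖ ^ 2 *
            (∏ j ∈ Finset.univ.erase i, (Real.sin (α j * pz * s / 2) / s) ^ 2) *
            (Real.sin (α i * pz * s / 2) / s) *
            ((Real.sin (α i * pz * s / 2) - α i * pz * s / 2 * Real.cos (α i * pz * s / 2)) / s)) /
          (∑ i, ‖px i‖ ^ 2 *
            (∏ j ∈ Finset.univ.erase i, (Real.sin (α j * pz * 1 / 2) / 1) ^ 2) *
            (Real.sin (α i * pz * 1 / 2) / 1) *
            ((Real.sin (α i * pz * 1 / 2) - α i * pz * 1 / 2 * Real.cos (α i * pz * 1 / 2)) / 1))) ^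
        (1 / ((k : ℝ) + 1)) ≥
      s ^ (((k : ℝ) + 3) / ((k : ℝ) + 1)) := by
  obtain ⟨hs0, hs1⟩ := hs
  -- bounds on the frequencies
  have hx0 : ∀ i : Fin d, 0 < |α i * pz| / 2 := by
    intro i
    have : α i * pz ≠ 0 := mul_ne_zero (hαpos i).ne' hpz
    positivity
  have hxπ : ∀ i : Fin d, |α i * pz| / 2 < π := by
    intro i
    have hle : α i ≤ α ⟨d - 1, by omega⟩ := hαmono (by simp [Fin.le_def]; omega)
    have h0 : 0 < α ⟨d - 1, by omega⟩ := hαpos _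
    have h1 : |α i * pz| < 2 * π := by
      rw [abs_mul, abs_of_pos (hαpos i)]
      calc α i * |pz| ≤ α ⟨d - 1, by omega⟩ * |pz| :=
            mul_le_mul_of_nonneg_right hle (abs_nonneg pz)
        _ < α ⟨d - 1, by omega⟩ * (2 * π / α ⟨d - 1, by omega⟩) :=
            mul_lt_mul_of_pos_left hpzb h0
        _ = 2 * π := by field_simp
    linarith
  -- rewrite both sums into sign-normalized form
  have eqs : ∀ (σ : ℝ), (∑ i, ‖px i‖ ^ 2 *
        (∏ j ∈ Finset.univ.erase i, (Real.sin (α j * pz * σ / 2) / σ) ^ 2) *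
        (Real.sin (α i * pz * σ / 2) / σ) *
        ((Real.sin (α i * pz * σ / 2) - α i * pz * σ / 2 * Real.cos (α i * pz * σ / 2)) / σ))
      = ∑ i, ‖px i‖ ^ 2 *
        (∏ j ∈ Finset.univ.erase i, (Real.sin (|α j * pz| / 2 * σ) / σ) ^ 2) *
        ((Real.sin (|α i * pz| / 2 * σ) / σ) *
          ((Real.sin (|α i * pz| / 2 * σ) - |α i * pz| / 2 * σ * Real.cos (|α i * pz| / 2 * σ)) / σ)) := by
    intro σ
    refine Finset.sum_congr rfl fun i _ => ?_
    rw [mul_assoc, abs_rw_prod (α i * pz) σ]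
    congr 2
    exact Finset.prod_congr rfl fun j _ => abs_rw_sq (α j * pz) σ
  rw [eqs s, eqs 1]
  simp only [mul_one, div_one]
  -- the two normalized sums
  set N : ℝ := ∑ i, ‖px i‖ ^ 2 *
      (∏ j ∈ Finset.univ.erase i, (Real.sin (|α j * pz| / 2 * s) / s) ^ 2) *
      ((Real.sin (|α i * pz| / 2 * s) / s) *
        ((Real.sin (|α i * pz| / 2 * s) - |α i * pz| / 2 * s * Real.cos (|α i * pz| / 2 * s)) / s)) with hN
  set D : ℝ := ∑ i, ‖px i‖ ^ 2 *
      (∏ j ∈ Finset.univ.erase i, (Real.sin (|α j * pz| / 2)) ^ 2) *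
      ((Real.sin (|α i * pz| / 2)) *
        ((Real.sin (|α i * pz| / 2) - |α i * pz| / 2 * Real.cos (|α i * pz| / 2)))) with hD
  -- denominator is positive
  have hterm0 : ∀ i : Fin d, 0 ≤ ‖px i‖ ^ 2 *
      (∏ j ∈ Finset.univ.erase i, (Real.sin (|α j * pz| / 2)) ^ 2) *
      ((Real.sin (|α i * pz| / 2)) *
        ((Real.sin (|α i * pz| / 2) - |α i * pz| / 2 * Real.cos (|α i * pz| / 2)))) := by
    intro i
    have h1 := (Real.sin_pos_of_pos_of_lt_pi (hx0 i) (hxπ i)).le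
    have h2 := (g_pos _ (hx0 i) (hxπ i)).le
    have h3 : (0:ℝ) ≤ ∏ j ∈ Finset.univ.erase i, (Real.sin (|α j * pz| / 2)) ^ 2 :=
      Finset.prod_nonneg fun j _ => sq_nonneg _
    exact mul_nonneg (mul_nonneg (sq_nonneg _) h3) (mul_nonneg h1 (by linarith [h2]))
  have hDpos : 0 < D := by
    obtain ⟨i0, hi0⟩ := hpx
    refine Finset.sum_pos' (fun i _ => hterm0 i) ⟨i0, Finset.mem_univ i0, ?_⟩
    have h1 := Real.sin_pos_of_pos_of_lt_pi (hx0 i0) (hxπ i0)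
    have h2 := g_pos _ (hx0 i0) (hxπ i0)
    have h3 : (0:ℝ) < ∏ j ∈ Finset.univ.erase i0, (Real.sin (|α j * pz| / 2)) ^ 2 :=
      Finset.prod_pos fun j _ =>
        pow_pos (Real.sin_pos_of_pos_of_lt_pi (hx0 j) (hxπ j)) 2
    have h4 : 0 < ‖px i0‖ ^ 2 := pow_pos (norm_pos_iff.mpr hi0) 2
    exact mul_pos (mul_pos h4 h3) (mul_pos h1 h2)
  -- numerator dominates s^2 * denominator
  have hkey : s ^ 2 * D ≤ N := by
    rw [hN, hD, Finset.mul_sum]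
    refine Finset.sum_le_sum fun i _ => ?_
    have hP : (∏ j ∈ Finset.univ.erase i, (Real.sin (|α j * pz| / 2)) ^ 2)
        ≤ ∏ j ∈ Finset.univ.erase i, (Real.sin (|α j * pz| / 2 * s) / s) ^ 2 :=
      Finset.prod_le_prod (fun j _ => sq_nonneg _)
        (fun j _ => sq_factor_ge s _ hs0 hs1.le (hx0 j) (hxπ j))
    have hP0 : (0:ℝ) ≤ ∏ j ∈ Finset.univ.erase i, (Real.sin (|α j * pz| / 2)) ^ 2 :=
      Finset.prod_nonneg fun j _ => sq_nonneg _
    have hab := term_ge s (|α i * pz| / 2) hs0 hs1.le (hx0 i) (hxπ i)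
    have h1 := (Real.sin_pos_of_pos_of_lt_pi (hx0 i) (hxπ i)).le
    have h2 := (g_pos _ (hx0 i) (hxπ i)).le
    have hC : (0:ℝ) ≤ ‖px i‖ ^ 2 := sq_nonneg _
    calc s ^ 2 * (‖px i‖ ^ 2 *
            (∏ j ∈ Finset.univ.erase i, (Real.sin (|α j * pz| / 2)) ^ 2) *
            ((Real.sin (|α i * pz| / 2)) *
              ((Real.sin (|α i * pz| / 2) - |α i * pz| / 2 * Real.cos (|α i * pz| / 2)))))
        = (‖px i‖ ^ 2 * (∏ j ∈ Finset.univ.erase i, (Real.sin (|α j * pz| / 2)) ^ 2)) *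
            (s ^ 2 * ((Real.sin (|α i * pz| / 2)) *
              ((Real.sin (|α i * pz| / 2) - |α i * pz| / 2 * Real.cos (|α i * pz| / 2))))) := by
          ring
      _ ≤ (‖px i‖ ^ 2 * (∏ j ∈ Finset.univ.erase i, (Real.sin (|α j * pz| / 2 * s) / s) ^ 2)) *
            ((Real.sin (|α i * pz| / 2 * s) / s) *
              ((Real.sin (|α i * pz| / 2 * s) - |α i * pz| / 2 * s * Real.cos (|α i * pz| / 2 * s)) / s)) := by
          refine mul_le_mul (mul_le_mul_of_nonneg_left hP hC) hab
            (mul_nonneg (sq_nonneg s) (mul_nonneg h1 h2)) ?_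
          have : (0:ℝ) ≤ ∏ j ∈ Finset.univ.erase i, (Real.sin (|α j * pz| / 2 * s) / s) ^ 2 :=
            Finset.prod_nonneg fun j _ => sq_nonneg _
          exact mul_nonneg hC this
      _ = ‖px i‖ ^ 2 * (∏ j ∈ Finset.univ.erase i, (Real.sin (|α j * pz| / 2 * s) / s) ^ 2) *
            ((Real.sin (|α i * pz| / 2 * s) / s) *
              ((Real.sin (|α i * pz| / 2 * s) - |α i * pz| / 2 * s * Real.cos (|α i * pz| / 2 * s)) / s)) := by
          ring
  have hR : s ^ 2 ≤ N / D := (le_div_iff₀ hDpos).2 (by linarith)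
  -- final rpow manipulation
  have hkpos : (0:ℝ) < (k:ℝ) + 1 := by positivity
  have hexp : (0:ℝ) ≤ 1 / ((k:ℝ) + 1) := by positivity
  have step1 : (s ^ 2 : ℝ) ^ (1 / ((k:ℝ) + 1)) ≤ (N / D) ^ (1 / ((k:ℝ) + 1)) :=
    Real.rpow_le_rpow (by positivity) hR hexp
  have step2 : (s ^ 2 : ℝ) ^ (1 / ((k:ℝ) + 1)) = s ^ ((2:ℝ) * (1 / ((k:ℝ) + 1))) := by
    rw [← Real.rpow_natCast s 2, ← Real.rpow_mul hs0.le]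
    norm_num
  have step3 : s ^ (((k : ℝ) + 3) / ((k : ℝ) + 1)) = s * s ^ ((2:ℝ) * (1 / ((k:ℝ) + 1))) := by
    rw [show ((k:ℝ) + 3) / ((k:ℝ) + 1) = 1 + 2 * (1 / ((k:ℝ) + 1)) by field_simp; ring,
      Real.rpow_add hs0, Real.rpow_one]
  rw [ge_iff_le, step3]
  exact mul_le_mul_of_nonneg_left (step2 ▸ step1) hs0.le
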